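/- Suppose each of n agents has a matroid rank valuation v_i on subsets of a finite set O of items. Let A be a utilitarian optimal allocation that is not leximin. Then there exists a utilitarian optimal allocation A' and indices i, j ∈ {1,…,n} with s(A)_j ≥ s(A)_i + 2 such that s(A') = s(A) + χ_i − χ_j, where χ_k denotes the k-th standard basis vector of ℤ^n. -/

import Mathlib

/-- An allocation: bundles are pairwise disjoint. -/
def IsAlloc {O : Type*} [DecidableEq O] {n : ℕ} (A : Fin n → Finset O) : Prop :=
  ∀ i j, i ≠ j → Disjoint (A i) (A j)

/-- Utilitarian social welfare. -/
def USW {O : Type*} {n : ℕ} (v : Fin n → Finset O → ℤ)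
    (A : Fin n → Finset O) : ℤ :=
  ∑ i, v i (A i)

/-- The vector of realized valuations, sorted in non-decreasing order. -/
def sVec {O : Type*} {n : ℕ} (v : Fin n → Finset O → ℤ)
    (A : Fin n → Finset O) : Fin n → ℤ :=
  (fun i => v i (A i)) ∘ Tuple.sort (fun i => v i (A i))

set_option linter.unusedSectionVars false


section Matroid
variable {O : Type*} [DecidableEq O] (f : Finset O → ℤ)
  (hz : f ∅ = 0)
  (hb : ∀ (S : Finset O) (o : O), o ∉ S → f (insert o S) - f S = 0 ∨ f (insert o S) - f S = 1)
  (hs : ∀ (S T : Finset O), S ⊆ T → ∀ o ∉ T, f (insert o T) - f T ≤ f (insert o S) - f S)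

include hb

lemma marg_nonneg {S : Finset O} {o : O} (ho : o ∉ S) : f S ≤ f (insert o S) := by
  rcases hb S o ho with h | h <;> omega

lemma marg_le_one (S : Finset O) (o : O) : f (insert o S) ≤ f S + 1 := by
  by_cases ho : o ∈ S
  · rw [Finset.insert_eq_self.2 ho]; omega
  · rcases hb S o ho with h | h <;> omega

lemma le_union (D S : Finset O) : f S ≤ f (S ∪ D) := by
  classical
  induction D using Finset.induction with
  | empty => rw [Finset.union_empty]
  | @insert o D ho ih =>
    rw [Finset.union_insert]
    by_cases hoSD : o ∈ S ∪ D
    · rw [Finset.insert_eq_self.2 hoSD]; exact ih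
    · exact le_trans ih (marg_nonneg f hb hoSD)

lemma f_mono {S T : Finset O} (h : S ⊆ T) : f S ≤ f T := by
  have := le_union f hb (T \ S) S
  rwa [Finset.union_sdiff_of_subset h] at this

lemma union_card_bound (D S : Finset O) : f (S ∪ D) ≤ f S + D.card := by
  classical
  induction D using Finset.induction with
  | empty => simp
  | @insert o D ho ih =>
    rw [Finset.union_insert, Finset.card_insert_of_notMem ho]
    have := marg_le_one f hb (S ∪ D) o
    omega

include hz in
lemma f_le_card (S : Finset O) : f S ≤ S.card := by
  have := union_card_bound f hb S ∅
  simpa [hz] using this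

include hz in
lemma f_nonneg (S : Finset O) : 0 ≤ f S := by
  have := f_mono f hb (Finset.empty_subset S)
  omega

/-- subset of an "independent" set is independent -/
lemma indep_subset {S T : Finset O} (h : S ⊆ T) (hT : f T = T.card)
    (hScard : f S ≤ S.card) : f S = S.card := by
  have h1 : f (S ∪ (T \ S)) ≤ f S + (T \ S).card := union_card_bound f hb (T \ S) S
  rw [Finset.union_sdiff_of_subset h] at h1
  have h2 : (T \ S).card = T.card - S.card := Finset.card_sdiff_of_subset h
  have h3 : S.card ≤ T.card := Finset.card_le_card h
  omega

include hs in
lemma span_lemma (D S : Finset O) (h : ∀ x ∈ D, x ∉ S → f (insert x S) = f S) :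
    f (S ∪ D) = f S := by
  classical
  induction D using Finset.induction with
  | empty => rw [Finset.union_empty]
  | @insert o D ho ih =>
    have hD : f (S ∪ D) = f S := ih (fun x hx => h x (Finset.mem_insert_of_mem hx))
    rw [Finset.union_insert]
    by_cases hoSD : o ∈ S ∪ D
    · rw [Finset.insert_eq_self.2 hoSD, hD]
    · have hoS : o ∉ S := fun hc => hoSD (Finset.mem_union_left _ hc)
      have h1 := hs S (S ∪ D) Finset.subset_union_left o hoSD
      rw [h o (Finset.mem_insert_self o D) hoS] at h1
      have h2 := marg_nonneg f hb hoSD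
      omega

include hs in
/-- matroid augmentation -/
lemma augment {S T : Finset O} (hS : f S = S.card) (hT : f T = T.card)
    (hlt : S.card < T.card) : ∃ x ∈ T, x ∉ S ∧ f (insert x S) = S.card + 1 := by
  classical
  by_contra hc
  push_neg at hc
  have hall : ∀ x ∈ T, x ∉ S → f (insert x S) = f S := by
    intro x hxT hxS
    have h1 := marg_nonneg f hb hxS
    have h2 := marg_le_one f hb S x
    have h3 := hc x hxT hxS
    omega
  have h4 : f (S ∪ T) = f S := span_lemma f hb hs T S hall
  have h5 : f T ≤ f (S ∪ T) := f_mono f hb Finset.subset_union_right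
  omega

include hz hs in
/-- if every element has marginal 1, the set is independent -/
lemma full_marginals : ∀ (S : Finset O), (∀ x ∈ S, f (S.erase x) < f S) → f S = S.card := by
  classical
  intro S
  induction S using Finset.strongInduction with
  | _ S ih =>
    intro h
    rcases Finset.eq_empty_or_nonempty S with rfl | ⟨x, hx⟩
    · simpa using hz
    · have hx' : f (S.erase x) = f S - 1 := by
        have h1 := h x hx
        have h2 : f S ≤ f (S.erase x) + 1 := by
          have := marg_le_one f hb (S.erase x) x
          rwa [Finset.insert_erase hx] at this
        omega
      have herase : f (S.erase x) = (S.erase x).card := by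
        apply ih (S.erase x) (Finset.erase_ssubset hx)
        intro y hy
        have hyS : y ∈ S := Finset.mem_of_mem_erase hy
        have hyx : y ≠ x := Finset.ne_of_mem_erase hy
        -- marginal of y at (S.erase x).erase y ≥ marginal at S.erase y = 1
        have hsub : (S.erase x).erase y ⊆ S.erase y := by
          intro z hz'
          simp only [Finset.mem_erase] at hz' ⊢
          exact ⟨hz'.1, hz'.2.2⟩
        have hyNot : y ∉ S.erase y := Finset.notMem_erase y S
        have h1 := hs ((S.erase x).erase y) (S.erase y) hsub y hyNot
        rw [Finset.insert_erase hyS] at h1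
        have h2 : y ∉ (S.erase x).erase y := Finset.notMem_erase _ _
        have h3 : insert y ((S.erase x).erase y) = S.erase x := by
          rw [Finset.insert_erase hy]
        rw [h3] at h1
        have h4 := h y hyS
        omega
      have hcard : (S.erase x).card = S.card - 1 := Finset.card_erase_of_mem hx
      have hpos : 0 < S.card := Finset.card_pos.2 ⟨x, hx⟩
      omega

include hz hs in
/-- cleaning: extract an independent subset realizing the value -/
lemma cleaning : ∀ (S : Finset O), ∃ S' ⊆ S, f S' = S'.card ∧ f S' = f S := by
  classical
  intro S
  induction S using Finset.strongInduction with
  | _ S ih =>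
    by_cases hind : f S = S.card
    · exact ⟨S, Finset.Subset.refl S, hind, rfl⟩
    · have : ¬ (∀ x ∈ S, f (S.erase x) < f S) := fun h => hind (full_marginals f hz hb hs S h)
      push_neg at this
      obtain ⟨x, hx, hge⟩ := this
      have heq : f (S.erase x) = f S :=
        le_antisymm (f_mono f hb (Finset.erase_subset x S)) hge
      obtain ⟨S', hsub, hS'⟩ := ih (S.erase x) (Finset.erase_ssubset hx)
      exact ⟨S', hsub.trans (Finset.erase_subset x S), hS'.1, hS'.2.trans heq⟩

end Matroid


namespace LexAux
variable {n : ℕ}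

/-- count of entries ≤ r -/
def cnt (f : Fin n → ℤ) (r : ℤ) : ℕ := (Finset.univ.filter (fun k => f k ≤ r)).card

lemma cnt_perm (f : Fin n → ℤ) (σ : Equiv.Perm (Fin n)) (r : ℤ) :
    cnt (f ∘ σ) r = cnt f r := by
  unfold cnt
  apply Finset.card_bij (fun k _ => σ k)
  · intro a ha
    simp only [Finset.mem_filter, Finset.mem_univ, true_and] at ha ⊢
    exact ha
  · intro a _ b _ hab
    exact σ.injective hab
  · intro b hb
    refine ⟨σ.symm b, ?_, by simp⟩
    simp only [Finset.mem_filter, Finset.mem_univ, true_and, Function.comp_apply,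
      Equiv.apply_symm_apply] at hb ⊢
    exact hb

lemma cnt_lt_iff {s : Fin n → ℤ} (hs : Monotone s) (r : ℤ) (p : Fin n) :
    (p : ℕ) < cnt s r ↔ s p ≤ r := by
  have := Tuple.lt_card_le_iff_apply_le_of_monotone (f := s) (a := r) (j := p) hs
  exact this

lemma cnt_mono (f : Fin n → ℤ) {r r' : ℤ} (h : r ≤ r') : cnt f r ≤ cnt f r' := by
  apply Finset.card_le_card
  intro k hk
  simp only [Finset.mem_filter, Finset.mem_univ, true_and] at hk ⊢
  omega

lemma cnt_le (f : Fin n → ℤ) (r : ℤ) : cnt f r ≤ n := by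
  have := Finset.card_filter_le (Finset.univ : Finset (Fin n)) (fun k => f k ≤ r)
  simpa [cnt] using this

/-- monotone tuples with the same multiset of values are equal -/
lemma monotone_unique {g t : Fin n → ℤ} (hg : Monotone g) (ht : Monotone t)
    (h : Multiset.map g Finset.univ.val = Multiset.map t Finset.univ.val) : g = t := by
  have hperm : (List.ofFn g).Perm (List.ofFn t) := by
    rw [← Multiset.coe_eq_coe]
    simpa [← Fin.univ_val_map] using h
  exact List.ofFn_injective (List.Perm.eq_of_sortedLE hg.sortedLE_ofFn ht.sortedLE_ofFn hperm)

/-- lex comparison from counts: if counts agree below r0 and t has strictly more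
entries ≤ r0 than s, then t <lex s -/
lemma lex_lt_of_cnt {s t : Fin n → ℤ} (hs : Monotone s) (ht : Monotone t) (r0 : ℤ)
    (hlow : ∀ r : ℤ, r < r0 → cnt t r = cnt s r) (hr0 : cnt s r0 < cnt t r0) :
    ∃ p : Fin n, (∀ q, q < p → t q = s q) ∧ t p < s p := by
  have hm : cnt s r0 < n := lt_of_lt_of_le hr0 (cnt_le t r0)
  set p : Fin n := ⟨cnt s r0, hm⟩ with hp
  have htp : t p ≤ r0 := (cnt_lt_iff ht r0 p).1 (by simpa [hp] using hr0)
  have hsp : r0 < s p := by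
    by_contra hc
    push_neg at hc
    have := (cnt_lt_iff hs r0 p).2 hc
    simp [hp] at this
  refine ⟨p, ?_, lt_of_le_of_lt htp hsp⟩
  intro q hq
  have hsq : s q ≤ r0 := (cnt_lt_iff hs r0 q).1 (lt_of_lt_of_le hq (by simp [hp]))
  have htq : t q ≤ r0 := le_trans (ht (le_of_lt hq)) htp
  by_contra hne
  rcases lt_or_gt_of_ne hne with hlt | hgt
  · -- t q < s q : then r := t q < r0? if t q = r0 then s q > r0 contra
    have h1 : t q < r0 := lt_of_lt_of_le hlt hsq
    have h2 := hlow (t q) h1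
    have h3 : (q:ℕ) < cnt t (t q) := (cnt_lt_iff ht (t q) q).2 le_rfl
    have h4 : ¬ (q:ℕ) < cnt s (t q) := by
      intro hc
      exact absurd ((cnt_lt_iff hs (t q) q).1 hc) (not_le.2 hlt)
    omega
  · have h1 : s q < r0 := lt_of_lt_of_le hgt htq
    have h2 := hlow (s q) h1
    have h3 : (q:ℕ) < cnt s (s q) := (cnt_lt_iff hs (s q) q).2 le_rfl
    have h4 : ¬ (q:ℕ) < cnt t (s q) := by
      intro hc
      exact absurd ((cnt_lt_iff ht (s q) q).1 hc) (not_le.2 hgt)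
    omega

/-- dominance: if s has everywhere at most as many small entries as t, then ¬ s <lex t -/
lemma not_lex_lt_of_cnt_le {s t : Fin n → ℤ} (hs : Monotone s) (ht : Monotone t)
    (h : ∀ r : ℤ, cnt s r ≤ cnt t r) :
    ¬ ∃ p : Fin n, (∀ q, q < p → s q = t q) ∧ s p < t p := by
  rintro ⟨p, _, hp2⟩
  have h1 : (p:ℕ) < cnt s (s p) := (cnt_lt_iff hs (s p) p).2 le_rfl
  have h2 : (p:ℕ) < cnt t (s p) := lt_of_lt_of_le h1 (h (s p))
  exact absurd ((cnt_lt_iff ht (s p) p).1 h2) (not_le.2 hp2)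


lemma lex_asymm {s t : Fin n → ℤ}
    (h1 : ∃ p : Fin n, (∀ q, q < p → s q = t q) ∧ s p < t p)
    (h2 : ∃ p : Fin n, (∀ q, q < p → t q = s q) ∧ t p < s p) : False := by
  obtain ⟨p1, ha1, ha2⟩ := h1
  obtain ⟨p2, hb1, hb2⟩ := h2
  rcases lt_trichotomy p1 p2 with h | h | h
  · have := hb1 p1 h; omega
  · subst h; omega
  · have := ha1 p2 h; omega

/-- pull out an element from the multiset of values over a finset -/
lemma msv_erase (f : Fin n → ℤ) (s : Finset (Fin n)) (i : Fin n) (hi : i ∈ s) :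
    Multiset.map f s.val = f i ::ₘ Multiset.map f (s.erase i).val := by
  conv_lhs => rw [← Multiset.cons_erase (Finset.mem_def.1 hi)]
  rw [Multiset.map_cons, Finset.erase_val]

/-- pull out two distinct elements from the multiset of values -/
lemma msv_pair (f : Fin n → ℤ) (i j : Fin n) (hij : i ≠ j) :
    Multiset.map f Finset.univ.val =
      f i ::ₘ f j ::ₘ Multiset.map f ((Finset.univ.erase i).erase j).val := by
  rw [msv_erase f Finset.univ i (Finset.mem_univ i),
    msv_erase f (Finset.univ.erase i) j (Finset.mem_erase.2 ⟨Ne.symm hij, Finset.mem_univ j⟩)]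

/-- multiset of values is invariant under composing with a permutation -/
lemma msv_perm (f : Fin n → ℤ) (σ : Equiv.Perm (Fin n)) :
    Multiset.map (f ∘ σ) Finset.univ.val = Multiset.map f Finset.univ.val := by
  rw [Fin.univ_val_map, Fin.univ_val_map, Multiset.coe_eq_coe]
  exact Equiv.Perm.ofFn_comp_perm σ f

/-- the multiset of values of a transfer vector -/
lemma msv_two_update {u u' : Fin n → ℤ} {i j : Fin n} (hij : i ≠ j)
    {a' b' : ℤ} (hi : u' i = a') (hj : u' j = b')
    (hother : ∀ k, k ≠ i → k ≠ j → u' k = u k) :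
    Multiset.map u' Finset.univ.val =
      a' ::ₘ b' ::ₘ Multiset.map u ((Finset.univ.erase i).erase j).val := by
  rw [msv_pair u' i j hij, hi, hj]
  congr 1
  congr 1
  apply Multiset.map_congr rfl
  intro k hk
  rw [← Finset.mem_def] at hk
  rw [Finset.mem_erase, Finset.mem_erase] at hk
  exact hother k hk.2.1 hk.1

/-- case (gap ≥ 2): sorted vector of transfer is transfer of sorted vector -/
lemma sorted_transfer {u u' : Fin n → ℤ} (i j : Fin n)
    (hab : u i + 2 ≤ u j)
    (hui' : u' i = u i + 1) (huj' : u' j = u j - 1)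
    (hother : ∀ k, k ≠ i → k ≠ j → u' k = u k) :
    ∃ p q : Fin n, (u ∘ Tuple.sort u) p + 2 ≤ (u ∘ Tuple.sort u) q ∧
      (u' ∘ Tuple.sort u') = fun k => (u ∘ Tuple.sort u) k +
        (if k = p then 1 else 0) - (if k = q then 1 else 0) := by
  have hij : i ≠ j := by intro h; rw [h] at hab; omega
  set s : Fin n → ℤ := u ∘ Tuple.sort u with hsdef
  have hs : Monotone s := Tuple.monotone_sort u
  have hPne : (Finset.univ.filter (fun k => s k = u i)).Nonempty :=
    ⟨(Tuple.sort u).symm i, by simp [hsdef]⟩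
  have hQne : (Finset.univ.filter (fun k => s k = u j)).Nonempty :=
    ⟨(Tuple.sort u).symm j, by simp [hsdef]⟩
  obtain ⟨p, hpmem, hpmax0⟩ := Finset.exists_max_image _ id hPne
  obtain ⟨q, hqmem, hqmin0⟩ := Finset.exists_min_image _ id hQne
  rw [Finset.mem_filter] at hpmem hqmem
  have hsp : s p = u i := hpmem.2
  have hsq : s q = u j := hqmem.2
  have hpmax : ∀ k, s k = u i → k ≤ p := fun k hk =>
    hpmax0 k (Finset.mem_filter.2 ⟨Finset.mem_univ k, hk⟩)
  have hqmin : ∀ k, s k = u j → q ≤ k := fun k hk =>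
    hqmin0 k (Finset.mem_filter.2 ⟨Finset.mem_univ k, hk⟩)
  have hpq : p < q := by
    by_contra hc
    push_neg at hc
    have := hs hc
    omega
  have hgt : ∀ k, p < k → u i + 1 ≤ s k := by
    intro k hk
    have h1 : s p ≤ s k := hs (le_of_lt hk)
    have h2 : s k ≠ u i := fun hcon => absurd hk (not_lt.2 (hpmax k hcon))
    omega
  have hlt : ∀ k, k < q → s k ≤ u j - 1 := by
    intro k hk
    have h1 : s k ≤ s q := hs (le_of_lt hk)
    have h2 : s k ≠ u j := fun hcon => absurd hk (not_lt.2 (hqmin k hcon))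
    omega
  set t : Fin n → ℤ := fun k => s k + (if k = p then 1 else 0) - (if k = q then 1 else 0)
    with htdef
  have hpnq : p ≠ q := ne_of_lt hpq
  have htp : t p = u i + 1 := by
    simp [htdef, hpnq, hsp]
  have htq : t q = u j - 1 := by
    simp [htdef, hpnq.symm, hsq]
  have hto : ∀ k, k ≠ p → k ≠ q → t k = s k := by
    intro k h1 h2
    simp [htdef, h1, h2]
  have hmt : Monotone t := by
    intro k l hkl
    rcases eq_or_lt_of_le hkl with heq | hkl
    · rw [heq]
    · rcases eq_or_ne k p with rfl | hkp
      · rw [htp]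
        rcases eq_or_ne l q with rfl | hlq
        · rw [htq]; omega
        · rw [hto l (ne_of_gt hkl) hlq]
          exact hgt l hkl
      · rcases eq_or_ne k q with rfl | hkq
        · rw [htq, hto l (ne_of_gt (lt_trans hpq hkl)) (ne_of_gt hkl)]
          have := hs (le_of_lt hkl)
          omega
        · rw [hto k hkp hkq]
          rcases eq_or_ne l p with rfl | hlp
          · rw [htp]
            have := hs (le_of_lt hkl)
            omega
          · rcases eq_or_ne l q with rfl | hlq
            · rw [htq]
              exact hlt k hkl
            · rw [hto l hlp hlq]
              exact hs (le_of_lt hkl)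
  -- multiset bookkeeping
  have h5 : Multiset.map s Finset.univ.val = Multiset.map u Finset.univ.val :=
    msv_perm u (Tuple.sort u)
  have h2 : Multiset.map s Finset.univ.val =
      u i ::ₘ u j ::ₘ Multiset.map s ((Finset.univ.erase p).erase q).val := by
    rw [msv_pair s p q hpnq, hsp, hsq]
  have h3 : Multiset.map u Finset.univ.val =
      u i ::ₘ u j ::ₘ Multiset.map u ((Finset.univ.erase i).erase j).val := by
    rw [msv_pair u i j hij]
  have hX : Multiset.map s ((Finset.univ.erase p).erase q).val =
      Multiset.map u ((Finset.univ.erase i).erase j).val := by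
    have := h2.symm.trans (h5.trans h3)
    rwa [Multiset.cons_inj_right, Multiset.cons_inj_right] at this
  have ht_ms : Multiset.map t Finset.univ.val = Multiset.map u' Finset.univ.val := by
    rw [msv_two_update hpnq htp htq hto, msv_two_update hij hui' huj' hother, hX]
  have hfinal : (u' ∘ Tuple.sort u') = t := by
    apply monotone_unique (Tuple.monotone_sort u') hmt
    rw [msv_perm u' (Tuple.sort u'), ← ht_ms]
  exact ⟨p, q, by rw [hsp, hsq]; exact hab, by rw [hfinal, htdef]⟩

/-- case (gap = 1): sorted vector unchanged by the swap -/
lemma sorted_swap {u u' : Fin n → ℤ} (i j : Fin n) (hij : i ≠ j)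
    (hb : u j = u i + 1)
    (hui' : u' i = u i + 1) (huj' : u' j = u j - 1)
    (hother : ∀ k, k ≠ i → k ≠ j → u' k = u k) :
    (u' ∘ Tuple.sort u') = (u ∘ Tuple.sort u) := by
  apply monotone_unique (Tuple.monotone_sort u') (Tuple.monotone_sort u)
  rw [msv_perm u' (Tuple.sort u'), msv_perm u (Tuple.sort u)]
  rw [msv_two_update hij hui' huj' hother, msv_pair u i j hij]
  rw [hb]
  have : u i + 1 - 1 = u i := by omega
  rw [this, Multiset.cons_swap]

/-- key counting bound: if sorted u <lex sorted w and `a` lower-bounds `u` on the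
improving set, then `a` lower-bounds `w` on the decreasing set. -/
lemma bound_lemma {u w : Fin n → ℤ}
    (hlex : ∃ p : Fin n, (∀ q, q < p → (u ∘ Tuple.sort u) q = (w ∘ Tuple.sort w) q) ∧
      (u ∘ Tuple.sort u) p < (w ∘ Tuple.sort w) p)
    {a : ℤ} (hmin : ∀ k, u k < w k → a ≤ u k) :
    ∀ j, w j < u j → a ≤ w j := by
  by_contra hc
  push_neg at hc
  set Jb : Finset (Fin n) := Finset.univ.filter (fun k => w k < u k ∧ w k < a) with hJbdef
  have hJbne : Jb.Nonempty := by
    obtain ⟨j, hj1, hj2⟩ := hc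
    exact ⟨j, by rw [hJbdef, Finset.mem_filter]; exact ⟨Finset.mem_univ j, hj1, hj2⟩⟩
  obtain ⟨j0, hj0mem, hj0min⟩ := Jb.exists_min_image w hJbne
  rw [hJbdef, Finset.mem_filter] at hj0mem
  set r0 : ℤ := w j0 with hr0def
  have hr0a : r0 < a := hj0mem.2.2
  have hJblb : ∀ k, w k < u k → w k < a → r0 ≤ w k := by
    intro k h1 h2
    exact hj0min k (by rw [hJbdef, Finset.mem_filter]; exact ⟨Finset.mem_univ k, h1, h2⟩)
  have clow : ∀ r : ℤ, r < r0 → cnt w r = cnt u r := by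
    intro r hr
    unfold cnt
    congr 1
    ext k
    simp only [Finset.mem_filter, Finset.mem_univ, true_and]
    constructor
    · intro hwk
      by_contra huk
      push_neg at huk
      have h1 : w k < u k := lt_of_le_of_lt hwk huk
      by_cases h2 : w k < a
      · have := hJblb k h1 h2; omega
      · omega
    · intro huk
      by_cases h1 : u k < w k
      · have := hmin k h1; omega
      · omega
  have cstrict : cnt u r0 < cnt w r0 := by
    unfold cnt
    apply Finset.card_lt_card
    rw [Finset.ssubset_iff_of_subset]
    · exact ⟨j0, by simp only [Finset.mem_filter, Finset.mem_univ, true_and]; omega⟩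
    · intro k hk
      simp only [Finset.mem_filter, Finset.mem_univ, true_and] at hk ⊢
      by_cases h1 : u k < w k
      · have := hmin k h1; omega
      · omega
  have hlow' : ∀ r : ℤ, r < r0 → cnt (w ∘ Tuple.sort w) r = cnt (u ∘ Tuple.sort u) r := by
    intro r hr
    rw [cnt_perm w (Tuple.sort w), cnt_perm u (Tuple.sort u)]
    exact clow r hr
  have hr0' : cnt (u ∘ Tuple.sort u) r0 < cnt (w ∘ Tuple.sort w) r0 := by
    rw [cnt_perm w (Tuple.sort w), cnt_perm u (Tuple.sort u)]
    exact cstrict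
  exact lex_asymm hlex
    (lex_lt_of_cnt (Tuple.monotone_sort u) (Tuple.monotone_sort w) r0 hlow' hr0')

end LexAux

section Alloc
variable {O : Type*} [DecidableEq O] [Fintype O] {n : ℕ}
  (v : Fin n → Finset O → ℤ)

variable (cleaning' : ∀ i (S : Finset O), ∃ S' ⊆ S, v i S' = S'.card ∧ v i S' = v i S)
variable (augment' : ∀ i (S T : Finset O), v i S = S.card → v i T = T.card →
    S.card < T.card → ∃ x ∈ T, x ∉ S ∧ v i (insert x S) = S.card + 1)
variable (indepsub' : ∀ i (S T : Finset O), S ⊆ T → v i T = T.card → v i S = S.card)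

include cleaning' in
omit [Fintype O] in
lemma alloc_clean (A : Fin n → Finset O) (hA : IsAlloc A) :
    ∃ C : Fin n → Finset O, IsAlloc C ∧ (∀ k, v k (C k) = (C k).card) ∧
      (∀ k, v k (C k) = v k (A k)) := by
  choose C hsubC hind hval using fun k => cleaning' k (A k)
  exact ⟨C, fun a b hab => Finset.disjoint_of_subset_left (hsubC a)
    (Finset.disjoint_of_subset_right (hsubC b) (hA a b hab)), hind, hval⟩

include augment' indepsub' in
lemma exchange_aux (M : ℤ) (hM : ∀ B : Fin n → Finset O, IsAlloc B → USW v B ≤ M) :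
    ∀ (N : ℕ) (C Bc : Fin n → Finset O), IsAlloc C → (∀ k, v k (C k) = (C k).card) →
    USW v C = M → IsAlloc Bc → (∀ k, v k (Bc k) = (Bc k).card) → ∀ j : Fin n,
    (C j).card < (Bc j).card → (∑ k, ((Bc k) \ (C k)).card) ≤ N →
    ∃ k, k ≠ j ∧ (Bc k).card < (C k).card ∧ ∃ C', IsAlloc C' ∧
      (∀ m, v m (C' m) = (C' m).card) ∧
      ∀ m, ((C' m).card : ℤ) = ((C m).card : ℤ) +
        (if m = j then 1 else 0) - (if m = k then 1 else 0) := by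
  intro N
  induction N with
  | zero =>
    intro C Bc _ _ _ _ _ j hj hmeas
    exfalso
    have h1 : ((Bc j) \ (C j)).card ≤ ∑ k, ((Bc k) \ (C k)).card :=
      Finset.single_le_sum (f := fun k => ((Bc k) \ (C k)).card)
        (fun k _ => Nat.zero_le _) (Finset.mem_univ j)
    have h0 : ((Bc j) \ (C j)).card = 0 := by omega
    have h2 : Bc j ⊆ C j := by
      rw [Finset.card_eq_zero, Finset.sdiff_eq_empty_iff_subset] at h0; exact h0
    exact absurd (Finset.card_le_card h2) (by omega)
  | succ N ih =>
    intro C Bc hC hCc hCM hB hBc j hj hmeas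
    obtain ⟨x, hxB, hxC, hxval⟩ := augment' j (C j) (Bc j) (hCc j) (hBc j) hj
    have hxk : ∃ k, x ∈ C k := by
      by_contra hc
      push_neg at hc
      set Cp : Fin n → Finset O := fun m => if m = j then insert x (C j) else C m with hCp
      have hCpj : Cp j = insert x (C j) := by simp [hCp]
      have hCpm : ∀ m, m ≠ j → Cp m = C m := by intro m hm; simp [hCp, hm]
      have hCpval : ∀ m, v m (Cp m) = v m (C m) + (if m = j then 1 else 0) := by
        intro m
        rcases eq_or_ne m j with rfl | hm
        · rw [hCpj, if_pos rfl, hxval, hCc m]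
        · rw [hCpm m hm, if_neg hm]; ring
      have hCpalloc : IsAlloc Cp := by
        intro a b hab
        rcases eq_or_ne a j with rfl | ha
        · rw [hCpj, hCpm b (Ne.symm hab)]
          exact Finset.disjoint_insert_left.2 ⟨hc b, hC a b hab⟩
        · rcases eq_or_ne b j with rfl | hb
          · rw [hCpj, hCpm a ha]
            exact Finset.disjoint_insert_right.2 ⟨hc a, hC a b hab⟩
          · rw [hCpm a ha, hCpm b hb]; exact hC a b hab
      have hUp : USW v Cp = M + 1 := by
        unfold USW
        rw [Finset.sum_congr rfl (fun m _ => hCpval m), Finset.sum_add_distrib,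
          Finset.sum_ite_eq' Finset.univ j (fun _ => (1:ℤ))]
        simp [← hCM, USW]
      have := hM Cp hCpalloc
      omega
    obtain ⟨k, hxCk⟩ := hxk
    have hkj : k ≠ j := fun h => hxC (h ▸ hxCk)
    set Cs : Fin n → Finset O := fun m =>
      if m = j then insert x (C j) else if m = k then (C k).erase x else C m with hCs
    have hCsj : Cs j = insert x (C j) := by simp [hCs]
    have hCsk : Cs k = (C k).erase x := by simp [hCs, hkj]
    have hCsm : ∀ m, m ≠ j → m ≠ k → Cs m = C m := by intro m h1 h2; simp [hCs, h1, h2]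
    have hxnotother : ∀ m, m ≠ k → x ∉ C m := by
      intro m hm hcon
      exact Finset.disjoint_left.1 (hC k m (fun h => hm h.symm)) hxCk hcon
    have hCsalloc : IsAlloc Cs := by
      have hmem : ∀ m z, z ∈ Cs m → (z ∈ C m ∧ (m = k → z ≠ x)) ∨ (m = j ∧ z = x) := by
        intro m z hz
        by_cases h1 : m = j
        · rw [h1, hCsj, Finset.mem_insert] at hz
          rcases hz with rfl | hz
          · exact Or.inr ⟨h1, rfl⟩
          · exact Or.inl ⟨h1 ▸ hz, fun hK => absurd (h1 ▸ hK : j = k) (Ne.symm hkj)⟩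
        · by_cases h2 : m = k
          · rw [h2, hCsk, Finset.mem_erase] at hz
            exact Or.inl ⟨h2 ▸ hz.2, fun _ => hz.1⟩
          · rw [hCsm m h1 h2] at hz
            exact Or.inl ⟨hz, fun hK => absurd hK h2⟩
      intro a b hab
      rw [Finset.disjoint_left]
      intro z hza hzb
      rcases hmem a z hza with ⟨ha1, ha2⟩ | ⟨haj, hax⟩
      · rcases hmem b z hzb with ⟨hb1, hb2⟩ | ⟨hbj, hbx⟩
        · exact Finset.disjoint_left.1 (hC a b hab) ha1 hb1
        · by_cases hak : a = k
          · exact ha2 hak hbx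
          · exact hxnotother a hak (hbx ▸ ha1)
      · rcases hmem b z hzb with ⟨hb1, hb2⟩ | ⟨hbj, hbx⟩
        · by_cases hbk : b = k
          · exact hb2 hbk hax
          · exact hxnotother b hbk (hax ▸ hb1)
        · exact hab (haj.trans hbj.symm)
    have hxCkcard : 1 ≤ (C k).card := Finset.card_pos.2 ⟨x, hxCk⟩
    have hCscard : ∀ m, ((Cs m).card : ℤ) = ((C m).card : ℤ) +
        (if m = j then 1 else 0) - (if m = k then 1 else 0) := by
      intro m
      rcases eq_or_ne m j with rfl | h1
      · rw [hCsj, Finset.card_insert_of_notMem hxC, if_pos rfl, if_neg (Ne.symm hkj)]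
        push_cast; ring
      · rcases eq_or_ne m k with rfl | h2
        · rw [hCsk, Finset.card_erase_of_mem hxCk, if_neg h1, if_pos rfl]
          push_cast [hxCkcard]; omega
        · rw [hCsm m h1 h2, if_neg h1, if_neg h2]; ring
    have hCsclean : ∀ m, v m (Cs m) = (Cs m).card := by
      intro m
      rcases eq_or_ne m j with rfl | h1
      · rw [hCsj, hxval, Finset.card_insert_of_notMem hxC]; push_cast; ring
      · rcases eq_or_ne m k with rfl | h2
        · rw [hCsk]
          exact indepsub' m _ _ (Finset.erase_subset _ _) (hCc m)
        · rw [hCsm m h1 h2]; exact hCc m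
    have hCsM : USW v Cs = M := by
      unfold USW
      have hpt : ∀ m, v m (Cs m) = v m (C m) +
          ((if m = j then 1 else 0) - (if m = k then 1 else 0)) := by
        intro m
        rw [hCsclean m, hCscard m, hCc m]; ring
      rw [Finset.sum_congr rfl (fun m _ => hpt m), Finset.sum_add_distrib,
        Finset.sum_sub_distrib, Finset.sum_ite_eq' Finset.univ j (fun _ => (1:ℤ)),
        Finset.sum_ite_eq' Finset.univ k (fun _ => (1:ℤ))]
      simp [← hCM, USW]
    by_cases hcase : (Bc k).card < (C k).card
    · exact ⟨k, hkj, hcase, Cs, hCsalloc, hCsclean, hCscard⟩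
    · have hjk2 : (Cs k).card < (Bc k).card := by
        have h := hCscard k
        rw [if_neg hkj, if_pos rfl] at h
        omega
      have hmeas' : (∑ m, ((Bc m) \ (Cs m)).card) ≤ N := by
        have hxmem : x ∈ (Bc j) \ (C j) := Finset.mem_sdiff.2 ⟨hxB, hxC⟩
        have hterm_j : ((Bc j) \ (Cs j)).card + 1 = ((Bc j) \ (C j)).card := by
          rw [hCsj]
          have he : (Bc j) \ (insert x (C j)) = ((Bc j) \ (C j)).erase x := by
            ext z
            simp only [Finset.mem_sdiff, Finset.mem_insert, Finset.mem_erase]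
            tauto
          rw [he, Finset.card_erase_of_mem hxmem]
          have := Finset.card_pos.2 ⟨x, hxmem⟩
          omega
        have hterm_k : ((Bc k) \ (Cs k)).card = ((Bc k) \ (C k)).card := by
          rw [hCsk]
          congr 1
          ext z
          simp only [Finset.mem_sdiff, Finset.mem_erase]
          constructor
          · rintro ⟨h1, h2⟩
            refine ⟨h1, fun hcon => h2 ⟨?_, hcon⟩⟩
            rintro rfl
            exact Finset.disjoint_left.1 (hB j k hkj.symm) hxB h1
          · rintro ⟨h1, h2⟩; exact ⟨h1, fun hcon => h2 hcon.2⟩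
        have e1 : (∑ m, ((Bc m) \ (Cs m)).card) =
            ((Bc j) \ (Cs j)).card + ∑ m ∈ Finset.univ.erase j, ((Bc m) \ (Cs m)).card :=
          (Finset.add_sum_erase _ _ (Finset.mem_univ j)).symm
        have e2 : (∑ m, ((Bc m) \ (C m)).card) =
            ((Bc j) \ (C j)).card + ∑ m ∈ Finset.univ.erase j, ((Bc m) \ (C m)).card :=
          (Finset.add_sum_erase _ _ (Finset.mem_univ j)).symm
        have e3 : ∑ m ∈ Finset.univ.erase j, ((Bc m) \ (Cs m)).card =
            ∑ m ∈ Finset.univ.erase j, ((Bc m) \ (C m)).card := by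
          apply Finset.sum_congr rfl
          intro m hm
          have hmj : m ≠ j := Finset.ne_of_mem_erase hm
          rcases eq_or_ne m k with rfl | hmk
          · exact hterm_k
          · rw [hCsm m hmj hmk]
        omega
      obtain ⟨k', hk'k, hBk', C'', hC''alloc, hC''clean, hC''card⟩ :=
        ih Cs Bc hCsalloc hCsclean hCsM hB hBc k hjk2 hmeas'
      have hk'j : k' ≠ j := by
        intro h
        subst h
        have hcs := hCscard k'
        rw [if_pos rfl, if_neg (Ne.symm hkj)] at hcs
        omega
      refine ⟨k', hk'j, ?_, C'', hC''alloc, hC''clean, ?_⟩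
      · have hcs := hCscard k'
        rw [if_neg hk'j, if_neg hk'k] at hcs
        omega
      · intro m
        have h1 := hC''card m
        have h2 := hCscard m
        rcases eq_or_ne m j with rfl | e1
        · rw [if_pos rfl, if_neg (Ne.symm hk'j)]
          rw [if_neg (Ne.symm hkj), if_neg (Ne.symm hk'j)] at h1
          rw [if_pos rfl, if_neg (Ne.symm hkj)] at h2
          omega
        · rcases eq_or_ne m k with rfl | e2
          · rw [if_neg hkj, if_neg (Ne.symm hk'k)]
            rw [if_pos rfl, if_neg (Ne.symm hk'k)] at h1
            rw [if_neg hkj, if_pos rfl] at h2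
            omega
          · rcases eq_or_ne m k' with rfl | e3
            · rw [if_neg e1, if_pos rfl]
              rw [if_neg e2, if_pos rfl] at h1
              rw [if_neg e1, if_neg e2] at h2
              omega
            · rw [if_neg e1, if_neg e3]
              rw [if_neg e2, if_neg e3] at h1
              rw [if_neg e1, if_neg e2] at h2
              omega
end Alloc


section Main
variable {O : Type*} [DecidableEq O] [Fintype O] {n : ℕ}

lemma main_aux (v : Fin n → Finset O → ℤ)
    (h0 : ∀ i, v i ∅ = 0)
    (hbin : ∀ i (S : Finset O) (o : O), o ∉ S →
      v i (insert o S) - v i S = 0 ∨ v i (insert o S) - v i S = 1)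
    (hsub : ∀ i (S T : Finset O), S ⊆ T → ∀ o ∉ T,
      v i (insert o T) - v i T ≤ v i (insert o S) - v i S) :
    ∀ (N : ℕ) (A B : Fin n → Finset O), IsAlloc A →
    (∀ B', IsAlloc B' → USW v B' ≤ USW v A) → IsAlloc B →
    (∃ p : Fin n, (∀ q, q < p → sVec v A q = sVec v B q) ∧ sVec v A p < sVec v B p) →
    (∑ k, (v k (B k) - v k (A k)).natAbs) ≤ N →
    ∃ A' : Fin n → Finset O, IsAlloc A' ∧
      (∀ B' : Fin n → Finset O, IsAlloc B' → USW v B' ≤ USW v A') ∧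
      ∃ i j : Fin n, sVec v A i + 2 ≤ sVec v A j ∧
        sVec v A' = fun k =>
          sVec v A k + (if k = i then 1 else 0) - (if k = j then 1 else 0) := by
  have cleaning' : ∀ i (S : Finset O), ∃ S' ⊆ S, v i S' = S'.card ∧ v i S' = v i S :=
    fun i S => cleaning (v i) (h0 i) (hbin i) (hsub i) S
  have augment' : ∀ i (S T : Finset O), v i S = S.card → v i T = T.card →
      S.card < T.card → ∃ x ∈ T, x ∉ S ∧ v i (insert x S) = S.card + 1 :=
    fun i S T hS hT hlt => augment (v i) (hbin i) (hsub i) hS hT hlt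
  have indepsub' : ∀ i (S T : Finset O), S ⊆ T → v i T = T.card → v i S = S.card :=
    fun i S T hST hT => indep_subset (v i) (hbin i) hST hT (f_le_card (v i) (h0 i) (hbin i) S)
  intro N
  induction N with
  | zero =>
    intro A B hA hopt hB hlex hmeas
    exfalso
    have hz : ∀ k, (v k (B k) - v k (A k)).natAbs = 0 := by
      intro k
      have h1 : (v k (B k) - v k (A k)).natAbs ≤ ∑ m, (v m (B m) - v m (A m)).natAbs :=
        Finset.single_le_sum (f := fun m => (v m (B m) - v m (A m)).natAbs)
          (fun m _ => Nat.zero_le _) (Finset.mem_univ k)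
      omega
    have heq : (fun k => v k (B k)) = (fun k => v k (A k)) := by
      funext k
      have := hz k
      omega
    have hBA : sVec v B = sVec v A := by unfold sVec; rw [heq]
    obtain ⟨p, _, hp⟩ := hlex
    rw [hBA] at hp
    omega
  | succ N ih =>
    intro A B hA hopt hB hlex hmeas
    -- the improving set is nonempty
    have hInonempty : (Finset.univ.filter (fun k => v k (A k) < v k (B k))).Nonempty := by
      rw [Finset.filter_nonempty_iff]
      by_contra hc
      push_neg at hc
      have hdom : ∀ r : ℤ,
          LexAux.cnt ((fun k => v k (A k)) ∘ Tuple.sort (fun k => v k (A k))) r ≤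
          LexAux.cnt ((fun k => v k (B k)) ∘ Tuple.sort (fun k => v k (B k))) r := by
        intro r
        rw [LexAux.cnt_perm, LexAux.cnt_perm]
        apply Finset.card_le_card
        intro k hk
        simp only [Finset.mem_filter, Finset.mem_univ, true_and] at hk ⊢
        have := hc k (Finset.mem_univ k)
        omega
      exact LexAux.not_lex_lt_of_cnt_le
        (Tuple.monotone_sort (fun k => v k (A k)))
        (Tuple.monotone_sort (fun k => v k (B k))) hdom hlex
    obtain ⟨i, himem, himin0⟩ := Finset.exists_min_image _ (fun k => v k (A k)) hInonempty
    rw [Finset.mem_filter] at himem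
    have hiw : v i (A i) < v i (B i) := himem.2
    have hmin : ∀ k, v k (A k) < v k (B k) → v i (A i) ≤ v k (A k) := fun k hk =>
      himin0 k (Finset.mem_filter.2 ⟨Finset.mem_univ k, hk⟩)
    -- clean allocations
    obtain ⟨C, hCalloc, hCclean, hCval⟩ := alloc_clean v cleaning' A hA
    obtain ⟨Bc, hBcalloc, hBcclean, hBcval⟩ := alloc_clean v cleaning' B hB
    have hCu : ∀ k, ((C k).card : ℤ) = v k (A k) := by
      intro k; rw [← hCclean k]; exact hCval k
    have hBw : ∀ k, ((Bc k).card : ℤ) = v k (B k) := by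
      intro k; rw [← hBcclean k]; exact hBcval k
    have hUSWC : USW v C = USW v A := Finset.sum_congr rfl (fun k _ => hCval k)
    have hji : (C i).card < (Bc i).card := by
      have h1 := hCu i; have h2 := hBw i; omega
    obtain ⟨j, hjne, hBj, C', hC'alloc, hC'clean, hC'card⟩ :=
      exchange_aux v augment' indepsub' (USW v A) hopt (∑ k, ((Bc k) \ (C k)).card)
        C Bc hCalloc hCclean hUSWC hBcalloc hBcclean i hji le_rfl
    have hwj : v j (B j) < v j (A j) := by
      have h1 := hCu j; have h2 := hBw j; omega
    have haj : v i (A i) ≤ v j (B j) :=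
      LexAux.bound_lemma (u := fun k => v k (A k)) (w := fun k => v k (B k)) hlex hmin j hwj
    have hu'eq : ∀ m, v m (C' m) = v m (A m) +
        (if m = i then 1 else 0) - (if m = j then 1 else 0) := by
      intro m
      have h1 := hC'card m
      have h2 := hC'clean m
      have h3 := hCu m
      by_cases e1 : m = i <;> by_cases e2 : m = j
      · exact absurd (e1.symm.trans e2) (Ne.symm hjne)
      · rw [if_pos e1, if_neg e2] at h1 ⊢; omega
      · rw [if_neg e1, if_pos e2] at h1 ⊢; omega
      · rw [if_neg e1, if_neg e2] at h1 ⊢; omega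
    have hij : i ≠ j := Ne.symm hjne
    have hu'i : v i (C' i) = v i (A i) + 1 := by
      have := hu'eq i
      rw [if_pos rfl, if_neg hij] at this
      omega
    have hu'j : v j (C' j) = v j (A j) - 1 := by
      have := hu'eq j
      rw [if_neg hjne, if_pos rfl] at this
      omega
    have hu'o : ∀ k, k ≠ i → k ≠ j → v k (C' k) = v k (A k) := by
      intro k h1 h2
      have := hu'eq k
      rw [if_neg h1, if_neg h2] at this
      omega
    have hUSWC' : USW v C' = USW v A := by
      unfold USW
      rw [Finset.sum_congr rfl (fun m _ => hu'eq m), Finset.sum_sub_distrib,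
        Finset.sum_add_distrib, Finset.sum_ite_eq' Finset.univ i (fun _ => (1:ℤ)),
        Finset.sum_ite_eq' Finset.univ j (fun _ => (1:ℤ))]
      simp
    have hoptC' : ∀ B', IsAlloc B' → USW v B' ≤ USW v C' := fun B' h =>
      (hopt B' h).trans_eq hUSWC'.symm
    by_cases hgap : v i (A i) + 2 ≤ v j (A j)
    · obtain ⟨p, q, hpq, heq⟩ :=
        LexAux.sorted_transfer (u := fun k => v k (A k)) (u' := fun k => v k (C' k))
          i j hgap hu'i hu'j hu'o
      exact ⟨C', hC'alloc, hoptC', p, q, hpq, heq⟩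
    · have hswap : v j (A j) = v i (A i) + 1 := by omega
      have hsvec : sVec v C' = sVec v A :=
        LexAux.sorted_swap (u := fun k => v k (A k)) (u' := fun k => v k (C' k))
          i j hij hswap hu'i hu'j hu'o
      have hmeas' : (∑ k, (v k (B k) - v k (C' k)).natAbs) ≤ N := by
        have hsplit : ∀ (g : Fin n → ℕ), ∑ k, g k =
            g i + (g j + ∑ k ∈ (Finset.univ.erase i).erase j, g k) := by
          intro g
          rw [Finset.add_sum_erase _ g
            (Finset.mem_erase.2 ⟨hjne, Finset.mem_univ j⟩),
            Finset.add_sum_erase _ g (Finset.mem_univ i)]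
        have h1 := hsplit (fun k => (v k (B k) - v k (A k)).natAbs)
        have h2 := hsplit (fun k => (v k (B k) - v k (C' k)).natAbs)
        have h3 : ∑ k ∈ (Finset.univ.erase i).erase j, (v k (B k) - v k (C' k)).natAbs
            = ∑ k ∈ (Finset.univ.erase i).erase j, (v k (B k) - v k (A k)).natAbs := by
          apply Finset.sum_congr rfl
          intro k hk
          rw [Finset.mem_erase, Finset.mem_erase] at hk
          rw [hu'o k hk.2.1 hk.1]
        rw [h1] at hmeas
        rw [h2, h3]
        have hfi : (v i (B i) - v i (C' i)).natAbs + 1 = (v i (B i) - v i (A i)).natAbs := by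
          rw [hu'i]; omega
        have hfj : (v j (B j) - v j (C' j)).natAbs + 1 = (v j (B j) - v j (A j)).natAbs := by
          rw [hu'j]; omega
        omega
      have hlex' : ∃ p : Fin n, (∀ q, q < p → sVec v C' q = sVec v B q) ∧
          sVec v C' p < sVec v B p := by
        rw [hsvec]; exact hlex
      obtain ⟨A'', hA''1, hA''2, p, q, hpq, heqq⟩ := ih C' B hC'alloc hoptC' hB hlex' hmeas'
      rw [hsvec] at hpq heqq
      exact ⟨A'', hA''1, hA''2, p, q, hpq, heqq⟩

end Main

/-- For matroid rank valuations, if a utilitarian optimal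
allocation `A` is not leximin, then there is another utilitarian optimal
allocation `A'` with `s(A') = s(A) + χ_i − χ_j` for indices `i, j` with
`s(A)_j ≥ s(A)_i + 2`. -/
theorem utilOpt_not_leximin_transfer
    {O : Type*} [DecidableEq O] [Fintype O] {n : ℕ}
    (v : Fin n → Finset O → ℤ)
    (h0 : ∀ i, v i ∅ = 0)
    (hbin : ∀ i (S : Finset O) (o : O), o ∉ S →
      v i (insert o S) - v i S = 0 ∨ v i (insert o S) - v i S = 1)
    (hsub : ∀ i (S T : Finset O), S ⊆ T → ∀ o ∉ T,
      v i (insert o T) - v i T ≤ v i (insert o S) - v i S)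
    (A : Fin n → Finset O)
    (hA : IsAlloc A)
    (hopt : ∀ B : Fin n → Finset O, IsAlloc B → USW v B ≤ USW v A)
    (hnotlex : ¬ ∀ B : Fin n → Finset O, IsAlloc B →
      toLex (sVec v B) ≤ toLex (sVec v A)) :
    ∃ A' : Fin n → Finset O, IsAlloc A' ∧
      (∀ B : Fin n → Finset O, IsAlloc B → USW v B ≤ USW v A') ∧
      ∃ i j : Fin n, sVec v A i + 2 ≤ sVec v A j ∧
        sVec v A' = fun k =>
          sVec v A k + (if k = i then 1 else 0) - (if k = j then 1 else 0) := by
  push_neg at hnotlex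
  obtain ⟨B, hB, hBlex⟩ := hnotlex
  have hlex : ∃ p : Fin n, (∀ q, q < p → sVec v A q = sVec v B q) ∧
      sVec v A p < sVec v B p := by
    exact hBlex
  exact main_aux v h0 hbin hsub (∑ k, (v k (B k) - v k (A k)).natAbs) A B hA hopt hB hlex le_rfl
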